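/- Let 𝒞′ →^F 𝒞 →^G 𝒞″ be a sequence of triangle functors between triangulated categories such that F is fully faithful, Im F = Ker G, and G induces a triangle-equivalence 𝒞/Ker G ≅ 𝒞″ (i.e., G is, up to equivalence, the Verdier quotient functor). Then F has a right (respectively left) adjoint F′ if and only if G has a right (respectively left) adjoint G′; and in that case the right (respectively left) adjoint G′ of G is fully faithful, Im G′ = Ker F′, and F′ induces a triangle-equivalence 𝒞/Ker F′ ≅ 𝒞′. -/

import Mathlib

/-!
STATEMENT 19: Let 𝒞′ →^F 𝒞 →^G 𝒞″ be a sequence of triangle functors between triangulated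
categories such that F is fully faithful, Im F = Ker G, and G induces a triangle-equivalence
𝒞/Ker G ≅ 𝒞″ (i.e., G is, up to equivalence, the Verdier quotient functor). Then F has a
right (respectively left) adjoint F′ if and only if G has a right (respectively left)
adjoint G′; and in that case the right (respectively left) adjoint G′ of G is fully
faithful, Im G′ = Ker F′, and F′ induces a triangle-equivalence 𝒞/Ker F′ ≅ 𝒞′.
-/
open CategoryTheory CategoryTheory.Limits CategoryTheory.Pretriangulated

section TriangulatedPreliminaries

universe v v' v'' u u' u''

variable {C : Type u} {C' : Type u'} {C'' : Type u''}
  [Category.{v} C] [Category.{v'} C'] [Category.{v''} C'']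
  [HasShift C ℤ] [HasShift C' ℤ] [HasShift C'' ℤ]
  [Preadditive C] [Preadditive C'] [Preadditive C'']
  [HasZeroObject C] [HasZeroObject C'] [HasZeroObject C'']
  [∀ n : ℤ, (shiftFunctor C n).Additive] [∀ n : ℤ, (shiftFunctor C' n).Additive]
  [∀ n : ℤ, (shiftFunctor C'' n).Additive]
  [Pretriangulated C] [Pretriangulated C'] [Pretriangulated C'']

/-- A functor between pretriangulated categories is a triangle functor if it admits a
commutation structure with the shifts for which it preserves distinguished triangles. -/
def IsTriangleFunctor (F : C ⥤ C') : Prop :=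
  ∃ c : F.CommShift ℤ, @Functor.IsTriangulated _ _ _ _ _ _ F c _ _ _ _ _ _ _ _

/-- The kernel of a functor: the class of objects sent to a zero object. -/
def kerSet (F : C ⥤ C') : Set C := { X | IsZero (F.obj X) }

/-- A left recollement `(𝒞', 𝒞, 𝒞'', i^*, i_*, j_!, j^*)`: there are adjoint pairs
`(i^*, i_*)` and `(j_!, j^*)`, the functors `i_*`, `j_!` are fully faithful, `j^* i_* = 0`,
and every object `X` fits in a distinguished triangle
`j_! j^* X ⟶ X ⟶ i_* i^* X ⟶ (j_! j^* X)[1]` whose morphisms into and out of `X` are the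
counit and the unit of the adjunctions. -/
def IsLeftRecollement (iStar : C ⥤ C') (iPush : C' ⥤ C)
    (jShriek : C'' ⥤ C) (jStar : C ⥤ C'') : Prop :=
  ∃ (adjI : iStar ⊣ iPush) (adjJ : jShriek ⊣ jStar),
    iPush.Full ∧ iPush.Faithful ∧ jShriek.Full ∧ jShriek.Faithful ∧
    (∀ X' : C', IsZero (jStar.obj (iPush.obj X'))) ∧
    (∀ X : C, ∃ h : iPush.obj (iStar.obj X) ⟶ (jShriek.obj (jStar.obj X))⟦(1 : ℤ)⟧,
      Triangle.mk (adjJ.counit.app X) (adjI.unit.app X) h ∈ distTriang C)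

/-- A recollement `(𝒞', 𝒞, 𝒞'', i^*, i_*, i^!, j_!, j^*, j_*)`, i.e. the data of
conditions (R1)-(R4): adjoint pairs `(i^*, i_*)`, `(i_*, i^!)`, `(j_!, j^*)`, `(j^*, j_*)`;
`i_*`, `j_!`, `j_*` fully faithful; `j^* i_* = 0`; and the two recollement distinguished
triangles `j_! j^* X ⟶ X ⟶ i_* i^* X ⟶ ⋅[1]` and `i_* i^! X ⟶ X ⟶ j_* j^* X ⟶ ⋅[1]`, whose
morphisms into and out of `X` are counits and units of the adjunctions. -/
def IsRecollement (iStar : C ⥤ C') (iPush : C' ⥤ C) (iShriek : C ⥤ C')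
    (jShriek : C'' ⥤ C) (jStar : C ⥤ C'') (jPush : C'' ⥤ C) : Prop :=
  ∃ (adjI₁ : iStar ⊣ iPush) (adjI₂ : iPush ⊣ iShriek)
    (adjJ₁ : jShriek ⊣ jStar) (adjJ₂ : jStar ⊣ jPush),
    iPush.Full ∧ iPush.Faithful ∧ jShriek.Full ∧ jShriek.Faithful ∧
    jPush.Full ∧ jPush.Faithful ∧
    (∀ X' : C', IsZero (jStar.obj (iPush.obj X'))) ∧
    (∀ X : C, ∃ h : iPush.obj (iStar.obj X) ⟶ (jShriek.obj (jStar.obj X))⟦(1 : ℤ)⟧,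
      Triangle.mk (adjJ₁.counit.app X) (adjI₁.unit.app X) h ∈ distTriang C) ∧
    (∀ X : C, ∃ h : jPush.obj (jStar.obj X) ⟶ (iPush.obj (iShriek.obj X))⟦(1 : ℤ)⟧,
      Triangle.mk (adjI₂.counit.app X) (adjJ₂.unit.app X) h ∈ distTriang C)

/-- An unbounded ladder of triangle functors, encoded by the four families
`a n = i_{2n} : 𝒞' ⥤ 𝒞`, `b n = i_{2n-1} : 𝒞'' ⥤ 𝒞`, `p n = j_{2n-1} : 𝒞 ⥤ 𝒞'` and
`q n = j_{2n} : 𝒞 ⥤ 𝒞''` (`n ∈ ℤ`): any two consecutive rows form a left or a right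
recollement of `𝒞` relative to `𝒞'` and `𝒞''`. -/
structure IsUnboundedLadder (a : ℤ → C' ⥤ C) (b : ℤ → C'' ⥤ C)
    (p : ℤ → C ⥤ C') (q : ℤ → C ⥤ C'') : Prop where
  tri_a : ∀ n, IsTriangleFunctor (a n)
  tri_b : ∀ n, IsTriangleFunctor (b n)
  tri_p : ∀ n, IsTriangleFunctor (p n)
  tri_q : ∀ n, IsTriangleFunctor (q n)
  left : ∀ n : ℤ, IsLeftRecollement (p n) (a n) (b n) (q n)
  right : ∀ n : ℤ, IsLeftRecollement (q n) (b (n + 1)) (a n) (p (n + 1))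

/-- The recollement `(i^*, i_*, i^!, j_!, j^*, j_*)` sits in an unbounded ladder, namely as
the `0`-th recollement `(j_{-1}, i_0, j_1, i_{-1}, j_0, i_1)` of the ladder. -/
def SitsInUnboundedLadder (iStar : C ⥤ C') (iPush : C' ⥤ C) (iShriek : C ⥤ C')
    (jShriek : C'' ⥤ C) (jStar : C ⥤ C'') (jPush : C'' ⥤ C) : Prop :=
  ∃ (a : ℤ → C' ⥤ C) (b : ℤ → C'' ⥤ C) (p : ℤ → C ⥤ C') (q : ℤ → C ⥤ C''),
    IsUnboundedLadder a b p q ∧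
    p 0 = iStar ∧ a 0 = iPush ∧ p 1 = iShriek ∧
    b 0 = jShriek ∧ q 0 = jStar ∧ b 1 = jPush

end TriangulatedPreliminaries
/-- The class of morphisms of `𝒞` whose cone lies in the kernel of `G`; the Verdier
quotient `𝒞 / Ker G` is the localization of `𝒞` at this class of morphisms. -/
def coneInKer {C D : Type*} [Category C] [Category D]
    [HasShift C ℤ] [Preadditive C] [HasZeroObject C]
    [∀ n : ℤ, (shiftFunctor C n).Additive] [Pretriangulated C]
    (G : C ⥤ D) : MorphismProperty C := fun X Y f =>
  ∃ (Z : C) (g : Y ⟶ Z) (h : Z ⟶ X⟦(1 : ℤ)⟧),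
    (Triangle.mk f g h ∈ distTriang C) ∧ IsZero (G.obj Z)

set_option linter.unusedSectionVars false

namespace VerdierAux

open Localization Opposite Category

section General

universe w₁ w₂ t₁ t₂

variable {C : Type t₁} {D : Type t₂} [Category.{w₁} C] [Category.{w₂} D]

theorem loc_map_bijective (L : C ⥤ D) (W : MorphismProperty C) [L.IsLocalization W] (M : C)
    (hM : ∀ ⦃X Y : C⦄ (w : X ⟶ Y), W w → Function.Bijective (fun (g : Y ⟶ M) => w ≫ g))
    (X : C) : Function.Bijective (fun (f : X ⟶ M) => L.map f) := by
  let A : Cᵒᵖ ⥤ Type (max w₁ w₂) := yoneda.obj M ⋙ uliftFunctor.{w₂}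
  have hA : W.op.IsInvertedBy A := by
    intro X Y w hw
    rw [isIso_iff_bijective]
    have : ((A.map w : A.obj X → A.obj Y)) = fun (f : ULift.{w₂} (X.unop ⟶ M)) => (ULift.up (w.unop ≫ f.down) : ULift.{w₂} (Y.unop ⟶ M)) := rfl
    rw [this]
    exact (Equiv.ulift.symm.bijective.comp (hM w.unop hw)).comp Equiv.ulift.bijective
  let HM : Dᵒᵖ ⥤ Type (max w₁ w₂) := Localization.lift A hA L.op
  let θ : L.op ⋙ HM ≅ A := Localization.Lifting.iso L.op W.op A HM
  let B : Dᵒᵖ ⥤ Type (max w₁ w₂) := yoneda.obj (L.obj M) ⋙ uliftFunctor.{w₁}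
  let α : A ⟶ L.op ⋙ B :=
    { app := fun X => ↾(fun (f : ULift.{w₂} (X.unop ⟶ M)) => (ULift.up (L.map f.down) : ULift.{w₁} (L.obj X.unop ⟶ L.obj M)))
      naturality := by
        intro X Y w
        ext f
        show ULift.up (L.map (w.unop ≫ f.down)) = ULift.up (L.map w.unop ≫ L.map f.down)
        rw [L.map_comp] }
  let u₀ : HM.obj (op (L.obj M)) := θ.inv.app (op M) (ULift.up (𝟙 M))
  have hθ₀ : θ.hom.app (op M) u₀ = ULift.up (𝟙 M) := by
    show (θ.inv.app (op M) ≫ θ.hom.app (op M)) (ULift.up (𝟙 M)) = ULift.up (𝟙 M)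
    rw [Iso.inv_hom_id_app]
    rfl
  let β : (L.op ⋙ B) ⟶ A :=
    { app := fun X => ↾(fun (g : ULift.{w₁} (L.obj X.unop ⟶ L.obj M)) => θ.hom.app X (HM.map g.down.op u₀))
      naturality := by
        intro X Y w
        ext g
        show θ.hom.app Y (HM.map (L.map w.unop ≫ g.down).op u₀)
          = A.map w (θ.hom.app X (HM.map g.down.op u₀))
        rw [op_comp, FunctorToTypes.map_comp_apply]
        exact FunctorToTypes.naturality θ.hom w _ }
  have hβα : ∀ (X : Cᵒᵖ) (f : A.obj X), β.app X (α.app X f) = f := by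
    intro X f
    show θ.hom.app X (HM.map (L.map f.down).op u₀) = f
    have h1 : θ.hom.app X (HM.map ((L.map f.down).op) u₀)
        = A.map f.down.op (θ.hom.app (op M) u₀) :=
      FunctorToTypes.naturality θ.hom f.down.op u₀
    rw [h1, hθ₀]
    show ULift.up (f.down ≫ 𝟙 M) = f
    rw [Category.comp_id]
    exact ULift.up_down f
  have hαβ : α ≫ β = 𝟙 A := by
    apply NatTrans.ext
    funext X; ext f
    exact hβα X f
  let Φ : HM ⟶ B := Localization.liftNatTrans L.op W.op A (L.op ⋙ B) HM B α
  let Ψ : B ⟶ HM := Localization.liftNatTrans L.op W.op (L.op ⋙ B) A B HM β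
  have hLB : Localization.Lifting.iso L.op W.op (L.op ⋙ B) B = Iso.refl _ := rfl
  have hΦΨ : Φ ≫ Ψ = 𝟙 HM := by
    rw [Localization.comp_liftNatTrans, hαβ, Localization.liftNatTrans_id]
  have hΦapp : ∀ (X : Cᵒᵖ) (t : HM.obj (L.op.obj X)),
      Φ.app (L.op.obj X) t = α.app X (θ.hom.app X t) := by
    intro X t
    have := types_congr_hom (Localization.liftNatTrans_app L.op W.op A (L.op ⋙ B) HM B α X) t
    rw [this, hLB]
    rfl
  have hΨapp : ∀ (X : Cᵒᵖ) (t : B.obj (L.op.obj X)),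
      Ψ.app (L.op.obj X) t = θ.inv.app X (β.app X t) := by
    intro X t
    have := types_congr_hom (Localization.liftNatTrans_app L.op W.op (L.op ⋙ B) A B HM β X) t
    rw [this, hLB]
    rfl
  have hΨΦ : Ψ ≫ Φ = 𝟙 B := by
    have hcore : (Ψ ≫ Φ).app (op (L.obj M)) (ULift.up (𝟙 (L.obj M))) =
        ULift.up (𝟙 (L.obj M)) := by
      show Φ.app (L.op.obj (op M)) (Ψ.app (L.op.obj (op M)) (ULift.up (𝟙 (L.obj M)))) = _
      erw [hΨapp (op M)]
      have hβ0 : β.app (op M) (ULift.up (𝟙 (L.obj M))) = ULift.up (𝟙 M) := by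
        show θ.hom.app (op M) (HM.map (𝟙 (L.obj M)).op u₀) = _
        rw [op_id, FunctorToTypes.map_id_apply]
        exact hθ₀
      rw [hβ0]
      rw [hΦapp (op M)]
      show α.app (op M) (θ.hom.app (op M) u₀) = _
      rw [hθ₀]
      show ULift.up (L.map (𝟙 M)) = _
      rw [L.map_id]
    apply NatTrans.ext
    funext Y; ext g
    have hg : g = B.map g.down.op (ULift.up (𝟙 (L.obj M))) := by
      show g = ULift.up (g.down.op.unop ≫ 𝟙 (L.obj M))
      rw [Quiver.Hom.unop_op, Category.comp_id]
      exact (ULift.up_down g).symm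
    show (Ψ ≫ Φ).app Y g = g
    conv_lhs => rw [hg]
    exact (FunctorToTypes.naturality (Ψ ≫ Φ) g.down.op _).trans ((congrArg (B.map g.down.op) hcore).trans hg.symm)
  have : IsIso Φ := ⟨Ψ, hΦΨ, hΨΦ⟩
  have hΦX : Function.Bijective (Φ.app (L.op.obj (op X))) :=
    (isIso_iff_bijective _).1 (inferInstance)
  have hθX : Function.Bijective (θ.inv.app (op X)) :=
    (isIso_iff_bijective _).1 (inferInstance)
  have hαX : Function.Bijective (α.app (op X)) := by
    have : α.app (op X) = fun a => Φ.app (L.op.obj (op X)) (θ.inv.app (op X) a) := by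
      funext a
      rw [hΦapp (op X)]
      have h2 : θ.hom.app (op X) (θ.inv.app (op X) a) = a :=
        types_congr_hom (θ.inv_hom_id_app (op X)) a
      rw [h2]
    rw [this]
    exact hΦX.comp hθX
  have : (fun (f : X ⟶ M) => L.map f) =
      fun f => (α.app (op X) (ULift.up f)).down := rfl
  rw [this]
  exact (Equiv.ulift.bijective.comp hαX).comp Equiv.ulift.symm.bijective


theorem loc_map_bijective' (L : C ⥤ D) (W : MorphismProperty C) [L.IsLocalization W] (N : C)
    (hN : ∀ ⦃X Y : C⦄ (w : X ⟶ Y), W w → Function.Bijective (fun (g : N ⟶ X) => g ≫ w))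
    (X : C) : Function.Bijective (fun (f : N ⟶ X) => L.map f) := by
  have key := loc_map_bijective L.op W.op (op N) ?_ (op X)
  · have hop : Function.Bijective (fun (f : N ⟶ X) => f.op) :=
      ⟨fun _ _ h => Quiver.Hom.op_inj h, fun φ => ⟨φ.unop, rfl⟩⟩
    have hunop : Function.Bijective
        (fun (ψ : L.op.obj (op X) ⟶ L.op.obj (op N)) => ψ.unop) :=
      ⟨fun _ _ h => Quiver.Hom.unop_inj h, fun φ => ⟨φ.op, rfl⟩⟩
    exact (hunop.comp key).comp hop
  · intro A B w hw
    have h := hN w.unop hw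
    have hop : Function.Bijective (fun (f : N ⟶ A.unop) => (f.op : A ⟶ op N)) :=
      ⟨fun _ _ hh => Quiver.Hom.op_inj hh, fun φ => ⟨φ.unop, rfl⟩⟩
    have hunop : Function.Bijective (fun (ψ : B ⟶ op N) => ψ.unop) :=
      ⟨fun _ _ hh => Quiver.Hom.unop_inj hh, fun φ => ⟨φ.op, rfl⟩⟩
    exact ((hop.comp h).comp hunop : _)


theorem counit_isIso_of_isLocalization (L : C ⥤ D) (W : MorphismProperty C)
    [L.IsLocalization W] {R : D ⥤ C} (adj : L ⊣ R) : IsIso adj.counit := by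
  haveI := Localization.essSurj L W
  suffices h : ∀ Y, IsIso (adj.counit.app Y) from NatIso.isIso_of_isIso_app _
  intro Y
  have hloc : ∀ ⦃A B : C⦄ (w : A ⟶ B), W w →
      Function.Bijective (fun (g : B ⟶ R.obj Y) => w ≫ g) := by
    intro A B w hw
    have hiso : IsIso (L.map w) := Localization.inverts L W w hw
    have he : (fun (g : B ⟶ R.obj Y) => w ≫ g)
        = fun g => adj.homEquiv A Y (L.map w ≫ (adj.homEquiv B Y).symm g) := by
      funext g
      rw [Adjunction.homEquiv_naturality_left, Equiv.apply_symm_apply]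
    rw [he]
    refine ((adj.homEquiv A Y).bijective.comp ?_).comp (adj.homEquiv B Y).symm.bijective
    exact ⟨fun u v h => by simpa using congrArg (fun t => inv (L.map w) ≫ t) h,
      fun u => ⟨inv (L.map w) ≫ u, by simp⟩⟩
  have key := fun X => loc_map_bijective L W (R.obj Y) hloc X
  have hpost : ∀ (X : C), Function.Bijective
      (fun (u : L.obj X ⟶ L.obj (R.obj Y)) => u ≫ adj.counit.app Y) := by
    intro X
    have h1 : Function.Bijective
        (fun (g : X ⟶ R.obj Y) => L.map g ≫ adj.counit.app Y) := by
      have he : (fun (g : X ⟶ R.obj Y) => L.map g ≫ adj.counit.app Y)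
          = fun g => (adj.homEquiv X Y).symm g := by
        funext g; rw [Adjunction.homEquiv_counit]
      rw [he]; exact (adj.homEquiv X Y).symm.bijective
    constructor
    · intro u v huv
      obtain ⟨u', rfl⟩ := (key X).2 u
      obtain ⟨v', rfl⟩ := (key X).2 v
      exact congrArg L.map (h1.1 huv)
    · intro t
      obtain ⟨g, hg⟩ := h1.2 t
      exact ⟨L.map g, hg⟩
  have hT : ∀ (T : D), Function.Bijective
      (fun (u : T ⟶ L.obj (R.obj Y)) => u ≫ adj.counit.app Y) := by
    intro T
    set e := L.objObjPreimageIso T with he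
    have h0 := hpost (L.objPreimage T)
    constructor
    · intro u v huv
      have huv' : u ≫ adj.counit.app Y = v ≫ adj.counit.app Y := huv
      have h2 := h0.1 (show (e.hom ≫ u) ≫ adj.counit.app Y
          = (e.hom ≫ v) ≫ adj.counit.app Y by rw [assoc, huv', assoc])
      have h2' : e.hom ≫ u = e.hom ≫ v := h2
      calc u = e.inv ≫ (e.hom ≫ u) := by rw [e.inv_hom_id_assoc]
      _ = e.inv ≫ (e.hom ≫ v) := by rw [h2']
      _ = v := by rw [e.inv_hom_id_assoc]
    · intro t
      obtain ⟨u, hu⟩ := h0.2 (e.hom ≫ t)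
      have hu' : u ≫ adj.counit.app Y = e.hom ≫ t := hu
      refine ⟨e.inv ≫ u, ?_⟩
      show (e.inv ≫ u) ≫ adj.counit.app Y = t
      rw [assoc, hu', e.inv_hom_id_assoc]
  obtain ⟨s, hs⟩ := (hT Y).2 (𝟙 Y)
  have hs' : s ≫ adj.counit.app Y = 𝟙 Y := hs
  have hsε : adj.counit.app Y ≫ s = 𝟙 _ := by
    apply (hT (L.obj (R.obj Y))).1
    show (adj.counit.app Y ≫ s) ≫ adj.counit.app Y = 𝟙 _ ≫ adj.counit.app Y
    rw [assoc, hs']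
    simp
  exact ⟨s, hsε, hs'⟩


theorem unit_isIso_of_isLocalization (L : C ⥤ D) (W : MorphismProperty C)
    [L.IsLocalization W] {R : D ⥤ C} (adj : R ⊣ L) : IsIso adj.unit := by
  haveI := Localization.essSurj L W
  suffices h : ∀ Y, IsIso (adj.unit.app Y) from NatIso.isIso_of_isIso_app _
  intro Y
  have hloc : ∀ ⦃A B : C⦄ (w : A ⟶ B), W w →
      Function.Bijective (fun (g : R.obj Y ⟶ A) => g ≫ w) := by
    intro A B w hw
    have hiso : IsIso (L.map w) := Localization.inverts L W w hw
    have he : (fun (g : R.obj Y ⟶ A) => g ≫ w)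
        = fun g => (adj.homEquiv Y B).symm (adj.homEquiv Y A g ≫ L.map w) := by
      funext g
      rw [← Adjunction.homEquiv_naturality_right, Equiv.symm_apply_apply]
    rw [he]
    have hmid : Function.Bijective (fun (u : Y ⟶ L.obj A) => u ≫ L.map w) :=
      ⟨fun u v h => by simpa using congrArg (fun t => t ≫ inv (L.map w)) h,
        fun u => ⟨u ≫ inv (L.map w), by simp⟩⟩
    exact ((adj.homEquiv Y B).symm.bijective.comp hmid).comp (adj.homEquiv Y A).bijective
  have key := fun X => loc_map_bijective' L W (R.obj Y) hloc X
  have hpre : ∀ (X : C), Function.Bijective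
      (fun (u : L.obj (R.obj Y) ⟶ L.obj X) => adj.unit.app Y ≫ u) := by
    intro X
    have h1 : Function.Bijective
        (fun (g : R.obj Y ⟶ X) => adj.unit.app Y ≫ L.map g) := by
      have he : (fun (g : R.obj Y ⟶ X) => adj.unit.app Y ≫ L.map g)
          = fun g => adj.homEquiv Y X g := by
        funext g; rw [Adjunction.homEquiv_unit]
      rw [he]; exact (adj.homEquiv Y X).bijective
    constructor
    · intro u v huv
      obtain ⟨u', rfl⟩ := (key X).2 u
      obtain ⟨v', rfl⟩ := (key X).2 v
      exact congrArg L.map (h1.1 huv)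
    · intro t
      obtain ⟨g, hg⟩ := h1.2 t
      exact ⟨L.map g, hg⟩
  have hT : ∀ (T : D), Function.Bijective
      (fun (u : L.obj (R.obj Y) ⟶ T) => adj.unit.app Y ≫ u) := by
    intro T
    set e := L.objObjPreimageIso T with he
    have h0 := hpre (L.objPreimage T)
    constructor
    · intro u v huv
      have huv' : adj.unit.app Y ≫ u = adj.unit.app Y ≫ v := huv
      have h2 := h0.1 (show adj.unit.app Y ≫ (u ≫ e.inv)
          = adj.unit.app Y ≫ (v ≫ e.inv) by rw [← assoc, huv', assoc])
      have h2' : u ≫ e.inv = v ≫ e.inv := h2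
      calc u = (u ≫ e.inv) ≫ e.hom := by rw [assoc, e.inv_hom_id, comp_id]
      _ = (v ≫ e.inv) ≫ e.hom := by rw [h2']
      _ = v := by rw [assoc, e.inv_hom_id, comp_id]
    · intro t
      obtain ⟨u, hu⟩ := h0.2 (t ≫ e.inv)
      have hu' : adj.unit.app Y ≫ u = t ≫ e.inv := hu
      refine ⟨u ≫ e.hom, ?_⟩
      show adj.unit.app Y ≫ (u ≫ e.hom) = t
      rw [← assoc, hu', assoc, e.inv_hom_id, comp_id]
  obtain ⟨s, hs⟩ := (hT Y).2 (𝟙 Y)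
  have hs' : adj.unit.app Y ≫ s = 𝟙 Y := hs
  have hsη : s ≫ adj.unit.app Y = 𝟙 _ := by
    apply (hT (L.obj (R.obj Y))).1
    show adj.unit.app Y ≫ (s ≫ adj.unit.app Y) = adj.unit.app Y ≫ 𝟙 _
    rw [← assoc, hs']
    simp
  exact ⟨s, hs', hsη⟩


theorem isLocalization_of_coreflective {F : D ⥤ C} {F' : C ⥤ D} (adj : F ⊣ F')
    [F.Full] [F.Faithful] :
    F'.IsLocalization ((MorphismProperty.isomorphisms D).inverseImage F') := by
  let W := (MorphismProperty.isomorphisms D).inverseImage F'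
  have hF' : W.IsInvertedBy F' := fun _ _ _ hf => hf
  have hcu : ∀ (X : C), W (adj.counit.app X) := by
    intro X
    haveI h : IsIso (adj.unit.app (F'.obj X) ≫ F'.map (adj.counit.app X)) := by
      rw [adj.right_triangle_components]
      exact ⟨𝟙 _, by simp, by simp⟩
    exact IsIso.of_isIso_comp_left (adj.unit.app (F'.obj X)) (F'.map (adj.counit.app X))
  have hQc : ∀ (X : C), IsIso ((Functor.whiskerRight adj.counit W.Q).app X) := fun X =>
    Localization.inverts W.Q W _ (hcu X)
  have : IsIso (Functor.whiskerRight adj.counit W.Q) := NatIso.isIso_of_isIso_app _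
  let e : W.Localization ≌ D :=
    CategoryTheory.Equivalence.mk (Localization.lift F' hF' W.Q) (F ⋙ W.Q)
      (liftNatIso W.Q W W.Q (F' ⋙ F ⋙ W.Q) _ _
        (W.Q.leftUnitor.symm ≪≫ (asIso (Functor.whiskerRight adj.counit W.Q)).symm ≪≫
          Functor.associator _ _ _))
      (Functor.associator _ _ _ ≪≫ Functor.isoWhiskerLeft _ (Localization.fac F' hF' W.Q) ≪≫
        (asIso adj.unit).symm)
  apply Functor.IsLocalization.of_equivalence_target W.Q W F' e
    (Localization.fac F' hF' W.Q)


end General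


/-- transfer of bijectivity of postcomposition along an isomorphism of sources -/
lemma bij_post_conj {C : Type*} [Category C] {X X' Y Z : C} (e : X' ≅ X) (f : Y ⟶ Z)
    (h : Function.Bijective (fun (v : X ⟶ Y) => v ≫ f)) :
    Function.Bijective (fun (v : X' ⟶ Y) => v ≫ f) := by
  constructor
  · intro u v huv
    have huv' : u ≫ f = v ≫ f := huv
    have h2' : e.inv ≫ u = e.inv ≫ v := h.1 (show (e.inv ≫ u) ≫ f = (e.inv ≫ v) ≫ f by
      rw [assoc, huv', assoc])
    calc u = e.hom ≫ (e.inv ≫ u) := by rw [e.hom_inv_id_assoc]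
    _ = e.hom ≫ (e.inv ≫ v) := by rw [h2']
    _ = v := by rw [e.hom_inv_id_assoc]
  · intro t
    obtain ⟨u, hu⟩ := h.2 (e.inv ≫ t)
    have hu' : u ≫ f = e.inv ≫ t := hu
    refine ⟨e.hom ≫ u, ?_⟩
    show (e.hom ≫ u) ≫ f = t
    rw [assoc, hu', e.hom_inv_id_assoc]

/-- transfer of bijectivity of precomposition along an isomorphism of targets -/
lemma bij_pre_conj {C : Type*} [Category C] {X Y Z Z' : C} (e : Z' ≅ Z) (f : X ⟶ Y)
    (h : Function.Bijective (fun (v : Y ⟶ Z) => f ≫ v)) :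
    Function.Bijective (fun (v : Y ⟶ Z') => f ≫ v) := by
  constructor
  · intro u v huv
    have huv' : f ≫ u = f ≫ v := huv
    have h2' : u ≫ e.hom = v ≫ e.hom := h.1 (show f ≫ (u ≫ e.hom) = f ≫ (v ≫ e.hom) by
      rw [← assoc, huv', assoc])
    calc u = (u ≫ e.hom) ≫ e.inv := by rw [assoc, e.hom_inv_id, comp_id]
    _ = (v ≫ e.hom) ≫ e.inv := by rw [h2']
    _ = v := by rw [assoc, e.hom_inv_id, comp_id]
  · intro t
    obtain ⟨u, hu⟩ := h.2 (t ≫ e.hom)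
    have hu' : f ≫ u = t ≫ e.hom := hu
    refine ⟨u ≫ e.inv, ?_⟩
    show f ≫ (u ≫ e.inv) = t
    rw [← assoc, hu', assoc, e.hom_inv_id, comp_id]

section Tri

universe v v' v'' u u' u''

variable {C : Type u} {C' : Type u'} {C'' : Type u''}
  [Category.{v} C] [Category.{v'} C'] [Category.{v''} C'']
  [HasShift C ℤ] [HasShift C' ℤ] [HasShift C'' ℤ]
  [Preadditive C] [Preadditive C'] [Preadditive C'']
  [HasZeroObject C] [HasZeroObject C'] [HasZeroObject C'']
  [∀ n : ℤ, (shiftFunctor C n).Additive] [∀ n : ℤ, (shiftFunctor C' n).Additive]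
  [∀ n : ℤ, (shiftFunctor C'' n).Additive]
  [Pretriangulated C] [Pretriangulated C'] [Pretriangulated C'']

section OnlyG

variable (G : C ⥤ C'') [G.CommShift ℤ] [G.IsTriangulated]

def IsLocOb (M : C) : Prop := ∀ ⦃A : C⦄, IsZero (G.obj A) → ∀ (f : A ⟶ M), f = 0

def IsColocOb (N : C) : Prop := ∀ ⦃A : C⦄, IsZero (G.obj A) → ∀ (f : N ⟶ A), f = 0

lemma ker_shift {A : C} (h : IsZero (G.obj A)) (n : ℤ) : IsZero (G.obj (A⟦n⟧)) :=
  IsZero.of_iso ((shiftFunctor C'' n).map_isZero h) ((G.commShiftIso n).app A)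

lemma locOb_of_iso {M M' : C} (h : IsLocOb G M) (e : M' ≅ M) : IsLocOb G M' := by
  intro A hA f
  have h1 : f ≫ e.hom = 0 := h hA (f ≫ e.hom)
  calc f = (f ≫ e.hom) ≫ e.inv := by rw [assoc, e.hom_inv_id, comp_id]
  _ = 0 := by rw [h1, zero_comp]

lemma colocOb_of_iso {N N' : C} (h : IsColocOb G N) (e : N' ≅ N) : IsColocOb G N' := by
  intro A hA f
  have h1 : e.inv ≫ f = 0 := h hA (e.inv ≫ f)
  calc f = e.hom ≫ (e.inv ≫ f) := by rw [e.hom_inv_id_assoc]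
  _ = 0 := by rw [h1, comp_zero]

lemma locOb_shift {M : C} (h : IsLocOb G M) (n : ℤ) : IsLocOb G (M⟦n⟧) := by
  intro A hA f
  have h2 : (shiftFunctor C (-n)).map f
      ≫ (shiftFunctorCompIsoId C n (-n) (by ring)).hom.app M = 0 :=
    h (ker_shift G hA (-n)) _
  have h3 : (shiftFunctor C (-n)).map f = 0 := by
    have := congrArg (fun t => t ≫ (shiftFunctorCompIsoId C n (-n) (by ring)).inv.app M) h2
    simpa using this
  apply (shiftFunctor C (-n)).map_injective
  rw [h3, Functor.map_zero]

lemma colocOb_shift {N : C} (h : IsColocOb G N) (n : ℤ) : IsColocOb G (N⟦n⟧) := by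
  intro A hA f
  have h2 : (shiftFunctorCompIsoId C n (-n) (by ring)).inv.app N
      ≫ (shiftFunctor C (-n)).map f = 0 :=
    h (ker_shift G hA (-n)) _
  have h3 : (shiftFunctor C (-n)).map f = 0 := by
    have := congrArg (fun t => (shiftFunctorCompIsoId C n (-n) (by ring)).hom.app N ≫ t) h2
    simpa using this
  apply (shiftFunctor C (-n)).map_injective
  rw [h3, Functor.map_zero]

lemma coneInKer_iff {X Y : C} (f : X ⟶ Y) :
    (∃ (Z : C) (g : Y ⟶ Z) (h : Z ⟶ X⟦(1 : ℤ)⟧),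
      (Triangle.mk f g h ∈ distTriang C) ∧ IsZero (G.obj Z)) ↔ IsIso (G.map f) := by
  constructor
  · rintro ⟨Z, g, h, hT, hZ⟩
    exact (Triangle.isZero₃_iff_isIso₁ _ (G.map_distinguished _ hT)).1 hZ
  · intro hf
    obtain ⟨Z, g, h, hT⟩ := distinguished_cocone_triangle f
    exact ⟨Z, g, h, hT,
      (Triangle.isZero₃_iff_isIso₁ _ (G.map_distinguished _ hT)).2 hf⟩

lemma postcomp_bij_of_loc {T : Triangle C} (hT : T ∈ distTriang C)
    (hloc : IsLocOb G T.obj₃) {A : C} (hA : IsZero (G.obj A)) :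
    Function.Bijective (fun (f : A ⟶ T.obj₁) => f ≫ T.mor₁) := by
  have h0 : ∀ (f : A ⟶ T.obj₁), f ≫ T.mor₁ = 0 → f = 0 := by
    intro f hf
    obtain ⟨g, hg⟩ := Triangle.coyoneda_exact₂ _ (inv_rot_of_distTriang _ hT) f hf
    have hg0 : g = 0 := locOb_shift G hloc (-1) hA g
    rw [hg, hg0, zero_comp]; rfl
  constructor
  · intro u v huv
    have huv' : u ≫ T.mor₁ = v ≫ T.mor₁ := huv
    have := h0 (u - v) (by rw [Preadditive.sub_comp, huv', sub_self])
    rwa [sub_eq_zero] at this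
  · intro u
    obtain ⟨g, hg⟩ := Triangle.coyoneda_exact₂ _ hT u (hloc hA (u ≫ T.mor₂))
    exact ⟨g, hg.symm⟩

lemma precomp_bij_of_coloc {T : Triangle C} (hT : T ∈ distTriang C)
    (hcoloc : IsColocOb G T.obj₁) {B : C} (hB : IsZero (G.obj B)) :
    Function.Bijective (fun (f : T.obj₃ ⟶ B) => T.mor₂ ≫ f) := by
  have h0 : ∀ (f : T.obj₃ ⟶ B), T.mor₂ ≫ f = 0 → f = 0 := by
    intro f hf
    obtain ⟨g, hg⟩ := Triangle.yoneda_exact₃ _ hT f hf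
    have hg0 : g = 0 := colocOb_shift G hcoloc 1 hB g
    rw [hg, hg0, comp_zero]
  constructor
  · intro u v huv
    have huv' : T.mor₂ ≫ u = T.mor₂ ≫ v := huv
    have := h0 (u - v) (by rw [Preadditive.comp_sub, huv', sub_self])
    rwa [sub_eq_zero] at this
  · intro u
    obtain ⟨g, hg⟩ := Triangle.yoneda_exact₂ _ hT u (hcoloc hB (T.mor₁ ≫ u))
    exact ⟨g, hg.symm⟩

lemma vanish_cov {T : Triangle C} (hT : T ∈ distTriang C) {A : C}
    (hsurj : Function.Surjective (fun (f : A ⟶ T.obj₁) => f ≫ T.mor₁))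
    (hinj : ∀ (v : A ⟶ T.obj₁⟦(1:ℤ)⟧), v ≫ T.mor₁⟦(1:ℤ)⟧' = 0 → v = 0)
    (g : A ⟶ T.obj₃) : g = 0 := by
  have h1 : g ≫ T.mor₃ = 0 := by
    apply hinj
    rw [assoc, comp_distTriang_mor_zero₃₁ T hT, comp_zero]
  obtain ⟨u, hu⟩ := Triangle.coyoneda_exact₃ _ hT g h1
  obtain ⟨v, hv⟩ := hsurj u
  have hv' : v ≫ T.mor₁ = u := hv
  rw [hu, ← hv', assoc, comp_distTriang_mor_zero₁₂ T hT, comp_zero]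

lemma vanish_con {T : Triangle C} (hT : T ∈ distTriang C) {B : C}
    (hsurj : Function.Surjective (fun (f : T.obj₃ ⟶ B) => T.mor₂ ≫ f))
    (hinj : ∀ (v : T.obj₃⟦(-1:ℤ)⟧ ⟶ B), T.mor₂⟦(-1:ℤ)⟧' ≫ v = 0 → v = 0)
    (g : T.obj₁ ⟶ B) : g = 0 := by
  have hz : T.mor₂⟦(-1:ℤ)⟧' ≫ T.invRotate.mor₁ = 0 := by
    dsimp [Triangle.invRotate]
    erw [Preadditive.comp_neg, ← Functor.map_comp_assoc,
      comp_distTriang_mor_zero₂₃ T hT, Functor.map_zero, zero_comp, neg_zero]; rfl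
  have h1 : T.invRotate.mor₁ ≫ g = 0 := by
    apply hinj
    erw [← assoc, hz, zero_comp]
  obtain ⟨u, hu⟩ := Triangle.yoneda_exact₂ _ (inv_rot_of_distTriang _ hT) g h1
  obtain ⟨v, hv⟩ := hsurj u
  have hv' : T.mor₂ ≫ v = u := hv
  have : T.invRotate.mor₂ = T.mor₁ := rfl
  erw [hu, this, ← hv', ← assoc, comp_distTriang_mor_zero₁₂ T hT, zero_comp]; rfl

/-- `W`-local object: precomposition with morphisms of `coneInKer G` is bijective. -/
lemma locOb_W_precomp_bij {M : C} (hM : IsLocOb G M) :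
    ∀ ⦃X Y : C⦄ (w : X ⟶ Y), coneInKer G w →
      Function.Bijective (fun (g : Y ⟶ M) => w ≫ g) := by
  intro X Y w hw
  obtain ⟨Z, g, h, hT, hZ⟩ := hw
  have h0 : ∀ (f : Y ⟶ M), w ≫ f = 0 → f = 0 := by
    intro f hf
    obtain ⟨u, hu⟩ := Triangle.yoneda_exact₂ _ hT f hf
    erw [hu, hM hZ u, comp_zero]; rfl
  constructor
  · intro u v huv
    have huv' : w ≫ u = w ≫ v := huv
    have := h0 (u - v) (by rw [Preadditive.comp_sub, huv', sub_self])
    rwa [sub_eq_zero] at this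
  · intro f
    have h1 : (Triangle.mk w g h).invRotate.mor₁ ≫ f = 0 :=
      hM (ker_shift G hZ (-1)) _
    obtain ⟨u, hu⟩ := Triangle.yoneda_exact₂ _ (inv_rot_of_distTriang _ hT) f h1
    exact ⟨u, hu.symm⟩

/-- colocal object: postcomposition with morphisms of `coneInKer G` is bijective. -/
lemma colocOb_W_postcomp_bij {N : C} (hN : IsColocOb G N) :
    ∀ ⦃X Y : C⦄ (w : X ⟶ Y), coneInKer G w →
      Function.Bijective (fun (g : N ⟶ X) => g ≫ w) := by
  intro X Y w hw
  obtain ⟨Z, g, h, hT, hZ⟩ := hw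
  have h0 : ∀ (f : N ⟶ X), f ≫ w = 0 → f = 0 := by
    intro f hf
    obtain ⟨u, hu⟩ := Triangle.coyoneda_exact₂ _ (inv_rot_of_distTriang _ hT) f hf
    erw [hu, hN (ker_shift G hZ (-1)) u, zero_comp]; rfl
  constructor
  · intro u v huv
    have huv' : u ≫ w = v ≫ w := huv
    have := h0 (u - v) (by rw [Preadditive.sub_comp, huv', sub_self])
    rwa [sub_eq_zero] at this
  · intro f
    obtain ⟨u, hu⟩ := Triangle.coyoneda_exact₂ _ hT f (hN hZ (f ≫ g))
    exact ⟨u, hu.symm⟩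

end OnlyG

section FG

variable (F : C' ⥤ C) (G : C ⥤ C'')
  [F.CommShift ℤ] [F.IsTriangulated] [G.CommShift ℤ] [G.IsTriangulated]
  [F.Full] [F.Faithful]

/-- helper equivalences -/
def preEquiv {D : Type*} [Category D] {X Y Z : D} (e : X ≅ Y) : (Y ⟶ Z) ≃ (X ⟶ Z) :=
  ⟨fun t => e.hom ≫ t, fun t => e.inv ≫ t,
    fun t => by simp, fun t => by simp⟩

def postEquiv {D : Type*} [Category D] {X Y Z : D} (e : Y ≅ Z) : (X ⟶ Y) ≃ (X ⟶ Z) :=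
  ⟨fun t => t ≫ e.hom, fun t => t ≫ e.inv,
    fun t => by simp, fun t => by simp⟩

lemma shifted_postcomp_inj {X Y A : C} (f : X ⟶ Y)
    (hinj : Function.Injective (fun (v : A⟦(-1:ℤ)⟧ ⟶ X) => v ≫ f)) :
    ∀ (v : A ⟶ X⟦(1:ℤ)⟧), v ≫ f⟦(1:ℤ)⟧' = 0 → v = 0 := by
  intro v hv
  let E := shiftEquiv' C (-1:ℤ) (1:ℤ) (by ring)
  let adj1 := E.toAdjunction
  have hzero : ∀ {P Q : C} , adj1.homEquiv P Q 0 = 0 := by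
    intro P Q
    rw [Adjunction.homEquiv_unit, Functor.map_zero, comp_zero]
  have hv' : v ≫ E.inverse.map f = 0 := hv
  have h1 : adj1.homEquiv A Y ((adj1.homEquiv A X).symm v ≫ f) = 0 := by
    erw [Adjunction.homEquiv_naturality_right, Equiv.apply_symm_apply, hv']
  have h2 : (adj1.homEquiv A X).symm v ≫ f = 0 := by
    apply (adj1.homEquiv A Y).injective
    rw [h1, hzero]
  have h3 : (adj1.homEquiv A X).symm v = 0 := by
    apply hinj
    show (adj1.homEquiv A X).symm v ≫ f = (0 : A⟦(-1:ℤ)⟧ ⟶ X) ≫ f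
    rw [h2, zero_comp]; rfl
  exact ((Equiv.apply_symm_apply _ v).symm.trans (congrArg (adj1.homEquiv A X) h3)).trans hzero

lemma shifted_precomp_inj {X Y B : C} (f : X ⟶ Y)
    (hinj : Function.Injective (fun (v : Y ⟶ B⟦(1:ℤ)⟧) => f ≫ v)) :
    ∀ (v : Y⟦(-1:ℤ)⟧ ⟶ B), f⟦(-1:ℤ)⟧' ≫ v = 0 → v = 0 := by
  intro v hv
  let E := shiftEquiv' C (-1:ℤ) (1:ℤ) (by ring)
  let adj1 := E.toAdjunction
  have hzero : ∀ {P Q : C} , adj1.homEquiv P Q 0 = 0 := by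
    intro P Q
    rw [Adjunction.homEquiv_unit, Functor.map_zero, comp_zero]
  have hv' : E.functor.map f ≫ v = 0 := hv
  have h1 : f ≫ adj1.homEquiv Y B v = 0 := by
    erw [← Adjunction.homEquiv_naturality_left, hv', hzero]
  have h2 : adj1.homEquiv Y B v = 0 := by
    apply hinj
    show f ≫ adj1.homEquiv Y B v = f ≫ (0 : Y ⟶ B⟦(1:ℤ)⟧)
    rw [h1, comp_zero]; rfl
  apply (adj1.homEquiv Y B).injective
  erw [h2, hzero]

lemma shifted_precomp_surj {X Y B : C} (f : X ⟶ Y)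
    (hbij : Function.Bijective (fun (v : Y ⟶ B⟦(-1:ℤ)⟧) => f ≫ v)) :
    Function.Surjective (fun (v : Y⟦(1:ℤ)⟧ ⟶ B) => f⟦(1:ℤ)⟧' ≫ v) := by
  intro t
  let E := shiftEquiv' C (1:ℤ) (-1:ℤ) (by ring)
  let adj2 := E.toAdjunction
  obtain ⟨s, hs⟩ := hbij.2 (adj2.homEquiv X B t)
  have hs' : f ≫ s = adj2.homEquiv X B t := hs
  refine ⟨(adj2.homEquiv Y B).symm s, ?_⟩
  show E.functor.map f ≫ (adj2.homEquiv Y B).symm s = t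
  apply (adj2.homEquiv X B).injective
  erw [Adjunction.homEquiv_naturality_left, Equiv.apply_symm_apply, hs']

/-- Further exactness lemma. -/
lemma vanish_con₃ {T : Triangle C} (hT : T ∈ distTriang C) {B : C}
    (hinj : ∀ (v : T.obj₂ ⟶ B), T.mor₁ ≫ v = 0 → v = 0)
    (hsurj : Function.Surjective (fun (v : T.obj₂⟦(1:ℤ)⟧ ⟶ B) => T.mor₁⟦(1:ℤ)⟧' ≫ v))
    (g : T.obj₃ ⟶ B) : g = 0 := by
  have h1 : T.mor₂ ≫ g = 0 :=
    hinj _ (by rw [← assoc, comp_distTriang_mor_zero₁₂ T hT, zero_comp])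
  obtain ⟨u, hu⟩ := Triangle.yoneda_exact₃ _ hT g h1
  obtain ⟨v, hv⟩ := hsurj u
  have hv' : T.mor₁⟦(1:ℤ)⟧' ≫ v = u := hv
  rw [hu, ← hv', ← assoc, comp_distTriang_mor_zero₃₁ T hT, zero_comp]

lemma precomp_mor₁_bij_of_coloc {T : Triangle C} (hT : T ∈ distTriang C)
    (hcoloc : IsColocOb G T.obj₃) {B : C} (hB : IsZero (G.obj B)) :
    Function.Bijective (fun (v : T.obj₂ ⟶ B) => T.mor₁ ≫ v) := by
  have h0 : ∀ (v : T.obj₂ ⟶ B), T.mor₁ ≫ v = 0 → v = 0 := by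
    intro v hv
    obtain ⟨u, hu⟩ := Triangle.yoneda_exact₂ _ hT v hv
    rw [hu, hcoloc hB u, comp_zero]
  constructor
  · intro u v huv
    have huv' : T.mor₁ ≫ u = T.mor₁ ≫ v := huv
    have := h0 (u - v) (by rw [Preadditive.comp_sub, huv', sub_self])
    rwa [sub_eq_zero] at this
  · intro t
    have h1 : T.invRotate.mor₁ ≫ t = 0 := colocOb_shift G hcoloc (-1) hB _
    obtain ⟨g, hg⟩ := Triangle.yoneda_exact₂ _ (inv_rot_of_distTriang _ hT) t h1
    exact ⟨g, hg.symm⟩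


variable {F G}

lemma him_FB (him : ∀ A : C, F.essImage A ↔ IsZero (G.obj A)) (B : C') :
    IsZero (G.obj (F.obj B)) :=
  (him _).1 ⟨B, ⟨Iso.refl _⟩⟩

lemma eps_postcomp_bij {F' : C ⥤ C'} (adjF : F ⊣ F')
    (him : ∀ A : C, F.essImage A ↔ IsZero (G.obj A))
    {A : C} (hA : IsZero (G.obj A)) (X : C) :
    Function.Bijective (fun (v : A ⟶ F.obj (F'.obj X)) => v ≫ adjF.counit.app X) := by
  obtain ⟨B, ⟨e⟩⟩ := (him A).2 hA
  refine bij_post_conj e.symm _ ?_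
  have hcomp : (fun (v : F.obj B ⟶ F.obj (F'.obj X)) => v ≫ adjF.counit.app X)
      = fun v => (adjF.homEquiv B X).symm (F.preimage v) := by
    funext v
    rw [Adjunction.homEquiv_counit, F.map_preimage]
  rw [hcomp]
  have hpre : Function.Bijective (fun (v : F.obj B ⟶ F.obj (F'.obj X)) => F.preimage v) :=
    ⟨fun u v huv => by
      have huv' : F.preimage u = F.preimage v := huv
      rw [← F.map_preimage u, ← F.map_preimage v, huv'],
     fun b => ⟨F.map b, by simp⟩⟩
  exact (adjF.homEquiv B X).symm.bijective.comp hpre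

lemma cone_of_counit_loc {F' : C ⥤ C'} (adjF : F ⊣ F')
    (him : ∀ A : C, F.essImage A ↔ IsZero (G.obj A)) {X Z : C} {u : X ⟶ Z}
    {h : Z ⟶ (F.obj (F'.obj X))⟦(1:ℤ)⟧}
    (hT : Triangle.mk (adjF.counit.app X) u h ∈ distTriang C) : IsLocOb G Z := by
  intro A hA f
  refine vanish_cov hT ?_ ?_ f
  · exact (eps_postcomp_bij adjF him hA X).2
  · exact shifted_postcomp_inj (adjF.counit.app X)
      ((eps_postcomp_bij adjF him (ker_shift G hA (-1)) X).1)

lemma eta_precomp_bij {F' : C ⥤ C'} (adjF : F' ⊣ F)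
    (him : ∀ A : C, F.essImage A ↔ IsZero (G.obj A))
    {A : C} (hA : IsZero (G.obj A)) (X : C) :
    Function.Bijective (fun (v : F.obj (F'.obj X) ⟶ A) => adjF.unit.app X ≫ v) := by
  obtain ⟨B, ⟨e⟩⟩ := (him A).2 hA
  refine bij_pre_conj e.symm _ ?_
  have hcomp : (fun (v : F.obj (F'.obj X) ⟶ F.obj B) => adjF.unit.app X ≫ v)
      = fun v => adjF.homEquiv X B (F.preimage v) := by
    funext v
    rw [Adjunction.homEquiv_unit, F.map_preimage]
  rw [hcomp]
  have hpre : Function.Bijective (fun (v : F.obj (F'.obj X) ⟶ F.obj B) => F.preimage v) :=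
    ⟨fun u v huv => by
      have huv' : F.preimage u = F.preimage v := huv
      rw [← F.map_preimage u, ← F.map_preimage v, huv'],
     fun b => ⟨F.map b, by simp⟩⟩
  exact (adjF.homEquiv X B).bijective.comp hpre

lemma cone_of_unit_coloc {F' : C ⥤ C'} (adjF : F' ⊣ F)
    (him : ∀ A : C, F.essImage A ↔ IsZero (G.obj A)) {X Z : C} {w : Z ⟶ X}
    {h : F.obj (F'.obj X) ⟶ Z⟦(1:ℤ)⟧}
    (hT : Triangle.mk w (adjF.unit.app X) h ∈ distTriang C) : IsColocOb G Z := by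
  intro A hA f
  refine vanish_con hT ?_ ?_ f
  · exact (eta_precomp_bij adjF him hA X).2
  · exact shifted_precomp_inj (adjF.unit.app X)
      ((eta_precomp_bij adjF him (ker_shift G hA 1) X).1)

/-- If `F` has a right adjoint, then `G` has a right adjoint. -/
lemma claimB (him : ∀ A : C, F.essImage A ↔ IsZero (G.obj A))
    [G.IsLocalization (coneInKer G)] {F' : C ⥤ C'} (adjF : F ⊣ F') :
    G.IsLeftAdjoint := by
  haveI := Localization.essSurj G (coneInKer G)
  have hdata : ∀ (X : C), ∃ (Z : C) (u : X ⟶ Z), IsLocOb G Z ∧ coneInKer G u := by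
    intro X
    obtain ⟨Z, u, h, hT⟩ := distinguished_cocone_triangle (adjF.counit.app X)
    refine ⟨Z, u, cone_of_counit_loc adjF him hT, ?_⟩
    obtain ⟨Z', g', h', hT'⟩ := distinguished_cocone_triangle u
    refine ⟨Z', g', h', hT', ?_⟩
    have h1 : IsZero (G.obj (F.obj (F'.obj X))) := him_FB him _
    have h2 : IsIso (G.map u) := by
      refine (Triangle.isZero₁_iff_isIso₂ _ (G.map_distinguished _ hT)).1 ?_
      exact h1
    exact (Triangle.isZero₃_iff_isIso₁ _ (G.map_distinguished _ hT')).2 h2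
  choose Zx ux hZloc hZW using hdata
  let G'obj : C'' → C := fun Y'' => Zx (G.objPreimage Y'')
  have K : ∀ (Y'' : C'') (X : C), Function.Bijective
      (fun (t : X ⟶ G'obj Y'') => G.map t) := fun Y'' X =>
    loc_map_bijective G (coneInKer G) _ (locOb_W_precomp_bij G (hZloc _)) X
  have hWiso : ∀ Y'' : C'', IsIso (G.map (ux (G.objPreimage Y''))) := fun Y'' =>
    (coneInKer_iff G _).1 (hZW _)
  let ψ : ∀ Y'' : C'', G.obj (G'obj Y'') ≅ Y'' := fun Y'' =>
    (@asIso _ _ _ _ _ (hWiso Y'')).symm ≪≫ G.objObjPreimageIso Y''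
  let E0 : ∀ (X : C) (Y'' : C''), (X ⟶ G'obj Y'') ≃ (G.obj X ⟶ Y'') := fun X Y'' =>
    (Equiv.ofBijective _ (K Y'' X)).trans (postEquiv (ψ Y''))
  let e : ∀ (X : C) (Y'' : C''), (G.obj X ⟶ Y'') ≃ (X ⟶ G'obj Y'') := fun X Y'' =>
    (E0 X Y'').symm
  have hE0 : ∀ (X : C) (Y'' : C'') (t : X ⟶ G'obj Y''),
      E0 X Y'' t = G.map t ≫ (ψ Y'').hom := fun _ _ _ => rfl
  have he : ∀ (X' X : C) (Y'' : C'') (f : X' ⟶ X) (g : G.obj X ⟶ Y''),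
      e X' Y'' (G.map f ≫ g) = f ≫ e X Y'' g := by
    intro X' X Y'' f g
    apply (E0 X' Y'').injective
    rw [Equiv.apply_symm_apply, hE0, G.map_comp, assoc]
    congr 1
    exact ((hE0 X Y'' (e X Y'' g)).symm.trans (Equiv.apply_symm_apply (E0 X Y'') g)).symm
  exact (Adjunction.adjunctionOfEquivRight e he).isLeftAdjoint

/-- If `G` has a right adjoint, then `F` has a right adjoint. -/
lemma claimC (him : ∀ A : C, F.essImage A ↔ IsZero (G.obj A))
    [G.IsLocalization (coneInKer G)] {G' : C'' ⥤ C} (adjG : G ⊣ G') :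
    F.IsLeftAdjoint := by
  haveI hcε : IsIso adjG.counit := counit_isIso_of_isLocalization G (coneInKer G) adjG
  have hGη : ∀ X : C, IsIso (G.map (adjG.unit.app X)) := by
    intro X
    haveI : IsIso (G.map (adjG.unit.app X) ≫ adjG.counit.app (G.obj X)) := by
      erw [adjG.left_triangle_components]
      exact ⟨𝟙 _, by simp, by simp⟩
    exact IsIso.of_isIso_comp_right (G.map (adjG.unit.app X)) (adjG.counit.app (G.obj X))
  have hlocG' : ∀ Y'', IsLocOb G (G'.obj Y'') := by
    intro Y'' A hA f
    have h1 : (adjG.homEquiv A Y'').symm f = (adjG.homEquiv A Y'').symm 0 :=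
      hA.eq_of_src _ _
    exact (adjG.homEquiv A Y'').symm.injective h1
  have hdata : ∀ X : C, ∃ (B₀ : C') (w : F.obj B₀ ⟶ X),
      ∀ (B : C'), Function.Bijective (fun (b : B ⟶ B₀) => F.map b ≫ w) := by
    intro X
    obtain ⟨Z, w, h, hT⟩ := distinguished_cocone_triangle₁ (adjG.unit.app X)
    have hZ : IsZero (G.obj Z) := by
      refine Triangle.isZero₁_of_isIso₂ _ (G.map_distinguished _ hT) ?_
      exact hGη X
    obtain ⟨B₀, ⟨eB⟩⟩ := (him Z).2 hZ
    refine ⟨B₀, eB.hom ≫ w, ?_⟩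
    intro B
    have hw : ∀ {A : C}, IsZero (G.obj A) →
        Function.Bijective (fun (v : A ⟶ Z) => v ≫ w) := fun hA =>
      postcomp_bij_of_loc G hT (hlocG' (G.obj X)) hA
    constructor
    · intro b₁ b₂ hb
      have hb' : F.map b₁ ≫ eB.hom ≫ w = F.map b₂ ≫ eB.hom ≫ w := hb
      have h2 : F.map b₁ ≫ eB.hom = F.map b₂ ≫ eB.hom :=
        (hw (him_FB him B)).1 (show (F.map b₁ ≫ eB.hom) ≫ w = (F.map b₂ ≫ eB.hom) ≫ w by
          rw [assoc, hb', assoc])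
      have h3 : F.map b₁ = F.map b₂ := by rwa [cancel_mono eB.hom] at h2
      exact F.map_injective h3
    · intro t
      obtain ⟨s, hs⟩ := (hw (him_FB him B)).2 t
      have hs' : s ≫ w = t := hs
      refine ⟨F.preimage (s ≫ eB.inv), ?_⟩
      show F.map (F.preimage (s ≫ eB.inv)) ≫ eB.hom ≫ w = t
      rw [F.map_preimage, assoc, eB.inv_hom_id_assoc, hs']
  choose F'obj wX hbij using hdata
  let e : ∀ (B : C') (X : C), (F.obj B ⟶ X) ≃ (B ⟶ F'obj X) := fun B X =>
    (Equiv.ofBijective _ (hbij X B)).symm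
  have he : ∀ (B' B : C') (X : C) (f : B' ⟶ B) (g : F.obj B ⟶ X),
      e B' X (F.map f ≫ g) = f ≫ e B X g := by
    intro B' B X f g
    apply (Equiv.ofBijective _ (hbij X B')).injective
    rw [Equiv.apply_symm_apply]
    show F.map f ≫ g = F.map (f ≫ e B X g) ≫ wX X
    rw [F.map_comp, assoc]
    congr 1
    exact (Equiv.apply_symm_apply (Equiv.ofBijective _ (hbij X B)) g).symm
  exact (Adjunction.adjunctionOfEquivRight e he).isLeftAdjoint

/-- If `F` has a left adjoint, then `G` has a left adjoint. -/
lemma claimB' (him : ∀ A : C, F.essImage A ↔ IsZero (G.obj A))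
    [G.IsLocalization (coneInKer G)] {F' : C ⥤ C'} (adjF : F' ⊣ F) :
    G.IsRightAdjoint := by
  haveI := Localization.essSurj G (coneInKer G)
  have hdata : ∀ (X : C), ∃ (Z : C) (w : Z ⟶ X), IsColocOb G Z ∧ coneInKer G w := by
    intro X
    obtain ⟨Z, w, h, hT⟩ := distinguished_cocone_triangle₁ (adjF.unit.app X)
    exact ⟨Z, w, cone_of_unit_coloc adjF him hT,
      ⟨F.obj (F'.obj X), adjF.unit.app X, h, hT, him_FB him _⟩⟩
  choose Zx wx hcoloc hW using hdata
  let G'obj : C'' → C := fun Y'' => Zx (G.objPreimage Y'')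
  have K : ∀ (Y'' : C'') (X : C), Function.Bijective
      (fun (t : G'obj Y'' ⟶ X) => G.map t) := fun Y'' X =>
    loc_map_bijective' G (coneInKer G) _ (colocOb_W_postcomp_bij G (hcoloc _)) X
  have hWiso : ∀ Y'' : C'', IsIso (G.map (wx (G.objPreimage Y''))) := fun Y'' =>
    (coneInKer_iff G _).1 (hW _)
  let φ : ∀ Y'' : C'', Y'' ≅ G.obj (G'obj Y'') := fun Y'' =>
    (G.objObjPreimageIso Y'').symm ≪≫ (@asIso _ _ _ _ _ (hWiso Y'')).symm
  let e : ∀ (Y'' : C'') (X : C), (G'obj Y'' ⟶ X) ≃ (Y'' ⟶ G.obj X) := fun Y'' X =>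
    (Equiv.ofBijective _ (K Y'' X)).trans (preEquiv (φ Y''))
  have he : ∀ (Y'' : C'') (X X' : C) (g : X ⟶ X') (h : G'obj Y'' ⟶ X),
      e Y'' X' (h ≫ g) = e Y'' X h ≫ G.map g := by
    intro Y'' X X' g h
    show (φ Y'').hom ≫ G.map (h ≫ g) = ((φ Y'').hom ≫ G.map h) ≫ G.map g
    rw [G.map_comp, assoc]
  exact (Adjunction.adjunctionOfEquivLeft e he).isRightAdjoint

/-- If `G` has a left adjoint, then `F` has a left adjoint. -/
lemma claimC' (him : ∀ A : C, F.essImage A ↔ IsZero (G.obj A))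
    [G.IsLocalization (coneInKer G)] {G' : C'' ⥤ C} (adjG : G' ⊣ G) :
    F.IsRightAdjoint := by
  haveI hη : IsIso adjG.unit := unit_isIso_of_isLocalization G (coneInKer G) adjG
  have hGε : ∀ X : C, IsIso (G.map (adjG.counit.app X)) := by
    intro X
    haveI : IsIso (adjG.unit.app (G.obj X) ≫ G.map (adjG.counit.app X)) := by
      erw [adjG.right_triangle_components]
      exact ⟨𝟙 _, by simp, by simp⟩
    exact IsIso.of_isIso_comp_left (adjG.unit.app (G.obj X)) (G.map (adjG.counit.app X))
  have hcolocG' : ∀ Y'', IsColocOb G (G'.obj Y'') := by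
    intro Y'' A hA f
    have h1 : adjG.homEquiv Y'' A f = adjG.homEquiv Y'' A 0 := hA.eq_of_tgt _ _
    exact (adjG.homEquiv Y'' A).injective h1
  have hdata : ∀ X : C, ∃ (B₀ : C') (w : X ⟶ F.obj B₀),
      ∀ (B : C'), Function.Bijective (fun (b : B₀ ⟶ B) => w ≫ F.map b) := by
    intro X
    obtain ⟨Z, u, h, hT⟩ := distinguished_cocone_triangle (adjG.counit.app X)
    have hZ : IsZero (G.obj Z) := by
      refine Triangle.isZero₃_of_isIso₁ _ (G.map_distinguished _ hT) ?_
      exact hGε X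
    obtain ⟨B₀, ⟨eB⟩⟩ := (him Z).2 hZ
    refine ⟨B₀, u ≫ eB.inv, ?_⟩
    intro B
    have hw : ∀ {A : C}, IsZero (G.obj A) →
        Function.Bijective (fun (v : Z ⟶ A) => u ≫ v) := fun hA =>
      precomp_bij_of_coloc G hT (hcolocG' (G.obj X)) hA
    constructor
    · intro b₁ b₂ hb
      have hb' : (u ≫ eB.inv) ≫ F.map b₁ = (u ≫ eB.inv) ≫ F.map b₂ := hb
      have h2 : eB.inv ≫ F.map b₁ = eB.inv ≫ F.map b₂ :=
        (hw (him_FB him B)).1 (show u ≫ (eB.inv ≫ F.map b₁) = u ≫ (eB.inv ≫ F.map b₂) by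
          rw [← assoc, hb', assoc])
      have h3 : F.map b₁ = F.map b₂ := by rwa [cancel_epi eB.inv] at h2
      exact F.map_injective h3
    · intro t
      obtain ⟨s, hs⟩ := (hw (him_FB him B)).2 t
      have hs' : u ≫ s = t := hs
      refine ⟨F.preimage (eB.hom ≫ s), ?_⟩
      show (u ≫ eB.inv) ≫ F.map (F.preimage (eB.hom ≫ s)) = t
      rw [F.map_preimage, assoc, eB.inv_hom_id_assoc, hs']
  choose F'obj wX hbij using hdata
  let e : ∀ (X : C) (B : C'), (F'obj X ⟶ B) ≃ (X ⟶ F.obj B) := fun X B =>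
    Equiv.ofBijective _ (hbij X B)
  have he : ∀ (X : C) (B B' : C') (g : B ⟶ B') (h : F'obj X ⟶ B),
      e X B' (h ≫ g) = e X B h ≫ F.map g := by
    intro X B B' g h
    show wX X ≫ F.map (h ≫ g) = (wX X ≫ F.map h) ≫ F.map g
    rw [F.map_comp, assoc]
  exact (Adjunction.adjunctionOfEquivLeft e he).isRightAdjoint


lemma part3 (him : ∀ A : C, F.essImage A ↔ IsZero (G.obj A))
    [G.IsLocalization (coneInKer G)]
    {F' : C ⥤ C'} {G' : C'' ⥤ C} (adjF : F ⊣ F') (adjG : G ⊣ G') :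
    G'.Full ∧ G'.Faithful ∧ (∀ M : C, G'.essImage M ↔ IsZero (F'.obj M)) ∧
      F'.IsLocalization (coneInKer F') := by
  haveI hcε : IsIso adjG.counit := counit_isIso_of_isLocalization G (coneInKer G) adjG
  have ffG' := adjG.fullyFaithfulROfIsIsoCounit
  have hGη : ∀ X : C, IsIso (G.map (adjG.unit.app X)) := by
    intro X
    haveI : IsIso (G.map (adjG.unit.app X) ≫ adjG.counit.app (G.obj X)) := by
      erw [adjG.left_triangle_components]
      exact ⟨𝟙 _, by simp, by simp⟩
    exact IsIso.of_isIso_comp_right (G.map (adjG.unit.app X)) (adjG.counit.app (G.obj X))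
  have hlocG' : ∀ Y'', IsLocOb G (G'.obj Y'') := by
    intro Y'' A hA f
    have h1 : (adjG.homEquiv A Y'').symm f = (adjG.homEquiv A Y'').symm 0 :=
      hA.eq_of_src _ _
    exact (adjG.homEquiv A Y'').symm.injective h1
  -- kernel of F' = local objects
  have hker_iff : ∀ M : C, IsZero (F'.obj M) ↔ IsLocOb G M := by
    intro M
    constructor
    · intro hM
      have hFF : IsZero (F.obj (F'.obj M)) := by
        rw [IsZero.iff_id_eq_zero]
        calc 𝟙 (F.obj (F'.obj M)) = F.map (F.preimage (𝟙 _)) := (F.map_preimage _).symm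
        _ = F.map (F.preimage (0 : F.obj (F'.obj M) ⟶ F.obj (F'.obj M))) := by
            rw [hM.eq_of_src (F.preimage (𝟙 _)) (F.preimage 0)]
        _ = 0 := F.map_preimage _
      obtain ⟨Z, u, h, hT⟩ := distinguished_cocone_triangle (adjF.counit.app M)
      have hu : IsIso u := (Triangle.isZero₁_iff_isIso₂ _ hT).1 hFF
      exact locOb_of_iso G (cone_of_counit_loc adjF him hT) (asIso u)
    · intro hloc
      rw [IsZero.iff_id_eq_zero]
      have h1 : (adjF.homEquiv (F'.obj M) M).symm (𝟙 _)
          = (adjF.homEquiv (F'.obj M) M).symm 0 :=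
        (hloc (him_FB him _) _).trans (hloc (him_FB him _) _).symm
      exact (adjF.homEquiv (F'.obj M) M).symm.injective h1
  -- essential image of G' = local objects
  have hG'ess_iff : ∀ M : C, G'.essImage M ↔ IsLocOb G M := by
    intro M
    constructor
    · rintro ⟨Y'', ⟨eY⟩⟩
      exact locOb_of_iso G (hlocG' Y'') eY.symm
    · intro hloc
      obtain ⟨Z, w, h, hT⟩ := distinguished_cocone_triangle₁ (adjG.unit.app M)
      have hZ : IsZero (G.obj Z) := by
        refine Triangle.isZero₁_of_isIso₂ _ (G.map_distinguished _ hT) ?_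
        exact hGη M
      have hw0 : w = 0 := hloc hZ w
      have hZ1 : IsZero (Z⟦(1:ℤ)⟧) := by
        rw [IsZero.iff_id_eq_zero]
        obtain ⟨u, hu⟩ := Triangle.coyoneda_exact₃ _ (rot_of_distTriang _ hT)
          (𝟙 (Z⟦(1:ℤ)⟧)) (by
            show 𝟙 _ ≫ (Triangle.mk w (adjG.unit.app M) h).rotate.mor₃ = 0
            dsimp [Triangle.rotate]
            erw [hw0, Functor.map_zero, neg_zero, comp_zero]; rfl)
        erw [hu, hlocG' (G.obj M) (ker_shift G hZ 1) u, zero_comp]; rfl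
      have hZ0 : IsZero Z := IsZero.of_iso ((shiftFunctor C (-1:ℤ)).map_isZero hZ1)
        ((shiftFunctorCompIsoId C (1:ℤ) (-1:ℤ) (by ring)).app Z).symm
      have hiso : IsIso (adjG.unit.app M) := (Triangle.isZero₁_iff_isIso₂ _ hT).1 hZ0
      exact ⟨G.obj M, ⟨(@asIso _ _ _ _ _ hiso).symm⟩⟩
  -- bijectivity characterization of `IsIso (F'.map f)`
  have hbij_iff : ∀ {X Y : C} (f : X ⟶ Y),
      IsIso (F'.map f) ↔ ∀ ⦃A : C⦄, IsZero (G.obj A) →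
        Function.Bijective (fun (v : A ⟶ X) => v ≫ f) := by
    intro X Y f
    constructor
    · intro hf A hA
      obtain ⟨B, ⟨eB⟩⟩ := (him A).2 hA
      refine bij_post_conj eB.symm _ ?_
      have hconj : (fun (v : F.obj B ⟶ X) => v ≫ f)
          = fun v => (adjF.homEquiv B Y).symm (adjF.homEquiv B X v ≫ F'.map f) := by
        funext v
        rw [← Adjunction.homEquiv_naturality_right, Equiv.symm_apply_apply]
      rw [hconj]
      have hmid : Function.Bijective (fun (t : B ⟶ F'.obj X) => t ≫ F'.map f) :=
        ⟨fun a b hab => by simpa using congrArg (fun t => t ≫ inv (F'.map f)) hab,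
         fun t => ⟨t ≫ inv (F'.map f), by simp⟩⟩
      exact ((adjF.homEquiv B Y).symm.bijective.comp hmid).comp (adjF.homEquiv B X).bijective
    · intro hbij
      have hB : ∀ B : C', Function.Bijective
          (fun (t : B ⟶ F'.obj X) => t ≫ F'.map f) := by
        intro B
        have h1 : (fun (t : B ⟶ F'.obj X) => t ≫ F'.map f)
            = fun t => adjF.homEquiv B Y ((adjF.homEquiv B X).symm t ≫ f) := by
          funext t
          rw [Adjunction.homEquiv_naturality_right, Equiv.apply_symm_apply]
        rw [h1]
        exact ((adjF.homEquiv B Y).bijective.comp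
          (hbij (him_FB him B))).comp (adjF.homEquiv B X).symm.bijective
      obtain ⟨s, hs⟩ := (hB (F'.obj Y)).2 (𝟙 _)
      have hs' : s ≫ F'.map f = 𝟙 _ := hs
      have hss : F'.map f ≫ s = 𝟙 _ := by
        apply (hB (F'.obj X)).1
        show (F'.map f ≫ s) ≫ F'.map f = 𝟙 _ ≫ F'.map f
        rw [assoc, hs', comp_id, id_comp]
      exact ⟨s, hss, hs'⟩
  have hcone_iff : ∀ {X Y : C} (f : X ⟶ Y), coneInKer F' f ↔ IsIso (F'.map f) := by
    intro X Y f
    constructor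
    · rintro ⟨Z, g, h, hT, hZ⟩
      rw [hbij_iff]
      intro A hA
      exact postcomp_bij_of_loc G hT ((hker_iff Z).1 hZ) hA
    · intro hf
      obtain ⟨Z, g, h, hT⟩ := distinguished_cocone_triangle f
      refine ⟨Z, g, h, hT, (hker_iff Z).2 ?_⟩
      intro A hA v
      refine vanish_cov hT ((hbij_iff f).1 hf hA).2 ?_ v
      exact shifted_postcomp_inj f (((hbij_iff f).1 hf (ker_shift G hA (-1))).1)
  have hWeq : coneInKer F' = (MorphismProperty.isomorphisms C').inverseImage F' := by
    funext X Y f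
    exact propext (hcone_iff f)
  refine ⟨ffG'.full, ffG'.faithful, ?_, ?_⟩
  · intro M
    rw [hG'ess_iff M, hker_iff M]
  · rw [hWeq]
    exact isLocalization_of_coreflective adjF


lemma part4 (him : ∀ A : C, F.essImage A ↔ IsZero (G.obj A))
    [G.IsLocalization (coneInKer G)]
    {F' : C ⥤ C'} {G' : C'' ⥤ C} (adjF : F' ⊣ F) (adjG : G' ⊣ G) :
    G'.Full ∧ G'.Faithful ∧ (∀ M : C, G'.essImage M ↔ IsZero (F'.obj M)) ∧
      F'.IsLocalization (coneInKer F') := by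
  haveI hη : IsIso adjG.unit := unit_isIso_of_isLocalization G (coneInKer G) adjG
  have ffG' := adjG.fullyFaithfulLOfIsIsoUnit
  have hGε : ∀ X : C, IsIso (G.map (adjG.counit.app X)) := by
    intro X
    haveI : IsIso (adjG.unit.app (G.obj X) ≫ G.map (adjG.counit.app X)) := by
      erw [adjG.right_triangle_components]
      exact ⟨𝟙 _, by simp, by simp⟩
    exact IsIso.of_isIso_comp_left (adjG.unit.app (G.obj X)) (G.map (adjG.counit.app X))
  have hcolocG' : ∀ Y'', IsColocOb G (G'.obj Y'') := by
    intro Y'' A hA f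
    have h1 : adjG.homEquiv Y'' A f = adjG.homEquiv Y'' A 0 := hA.eq_of_tgt _ _
    exact (adjG.homEquiv Y'' A).injective h1
  have hker_iff : ∀ M : C, IsZero (F'.obj M) ↔ IsColocOb G M := by
    intro M
    constructor
    · intro hM
      have hFF : IsZero (F.obj (F'.obj M)) := by
        rw [IsZero.iff_id_eq_zero]
        calc 𝟙 (F.obj (F'.obj M)) = F.map (F.preimage (𝟙 _)) := (F.map_preimage _).symm
        _ = F.map (F.preimage (0 : F.obj (F'.obj M) ⟶ F.obj (F'.obj M))) := by
            rw [hM.eq_of_src (F.preimage (𝟙 _)) (F.preimage 0)]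
        _ = 0 := F.map_preimage _
      obtain ⟨Z, w, h, hT⟩ := distinguished_cocone_triangle₁ (adjF.unit.app M)
      have hw : IsIso w := (Triangle.isZero₃_iff_isIso₁ _ hT).1 hFF
      exact colocOb_of_iso G (cone_of_unit_coloc adjF him hT) (@asIso _ _ _ _ _ hw).symm
    · intro hcoloc
      rw [IsZero.iff_id_eq_zero]
      have h1 : adjF.homEquiv M (F'.obj M) (𝟙 _) = adjF.homEquiv M (F'.obj M) 0 :=
        (hcoloc (him_FB him _) _).trans (hcoloc (him_FB him _) _).symm
      exact (adjF.homEquiv M (F'.obj M)).injective h1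
  have hG'ess_iff : ∀ M : C, G'.essImage M ↔ IsColocOb G M := by
    intro M
    constructor
    · rintro ⟨Y'', ⟨eY⟩⟩
      exact colocOb_of_iso G (hcolocG' Y'') eY.symm
    · intro hcoloc
      obtain ⟨Z, u, h, hT⟩ := distinguished_cocone_triangle (adjG.counit.app M)
      have hZ : IsZero (G.obj Z) := by
        refine Triangle.isZero₃_of_isIso₁ _ (G.map_distinguished _ hT) ?_
        exact hGε M
      have hu0 : u = 0 := hcoloc hZ u
      have hZ0 : IsZero Z := by
        rw [IsZero.iff_id_eq_zero]
        obtain ⟨g, hg⟩ := Triangle.yoneda_exact₃ _ hT (𝟙 Z) (by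
          show (Triangle.mk (adjG.counit.app M) u h).mor₂ ≫ 𝟙 Z = 0
          erw [show (Triangle.mk (adjG.counit.app M) u h).mor₂ = 0 from hu0, zero_comp])
        erw [hg, colocOb_shift G (hcolocG' (G.obj M)) 1 hZ g, comp_zero]; rfl
      have hiso : IsIso (adjG.counit.app M) := (Triangle.isZero₃_iff_isIso₁ _ hT).1 hZ0
      exact ⟨G.obj M, ⟨@asIso _ _ _ _ _ hiso⟩⟩
  have hbij_iff : ∀ {X Y : C} (f : X ⟶ Y),
      IsIso (F'.map f) ↔ ∀ ⦃A : C⦄, IsZero (G.obj A) →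
        Function.Bijective (fun (v : Y ⟶ A) => f ≫ v) := by
    intro X Y f
    constructor
    · intro hf A hA
      obtain ⟨B, ⟨eB⟩⟩ := (him A).2 hA
      refine bij_pre_conj eB.symm _ ?_
      have hconj : (fun (v : Y ⟶ F.obj B) => f ≫ v)
          = fun v => adjF.homEquiv X B (F'.map f ≫ (adjF.homEquiv Y B).symm v) := by
        funext v
        rw [Adjunction.homEquiv_naturality_left, Equiv.apply_symm_apply]
      rw [hconj]
      have hmid : Function.Bijective (fun (t : F'.obj Y ⟶ B) => F'.map f ≫ t) :=
        ⟨fun a b hab => by simpa using congrArg (fun t => inv (F'.map f) ≫ t) hab,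
         fun t => ⟨inv (F'.map f) ≫ t, by simp⟩⟩
      exact ((adjF.homEquiv X B).bijective.comp hmid).comp (adjF.homEquiv Y B).symm.bijective
    · intro hbij
      have hB : ∀ B : C', Function.Bijective
          (fun (t : F'.obj Y ⟶ B) => F'.map f ≫ t) := by
        intro B
        have h1 : (fun (t : F'.obj Y ⟶ B) => F'.map f ≫ t)
            = fun t => (adjF.homEquiv X B).symm (f ≫ adjF.homEquiv Y B t) := by
          funext t
          rw [← Adjunction.homEquiv_naturality_left, Equiv.symm_apply_apply]
        rw [h1]
        exact ((adjF.homEquiv X B).symm.bijective.comp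
          (hbij (him_FB him B))).comp (adjF.homEquiv Y B).bijective
      obtain ⟨s, hs⟩ := (hB (F'.obj X)).2 (𝟙 _)
      have hs' : F'.map f ≫ s = 𝟙 _ := hs
      have hss : s ≫ F'.map f = 𝟙 _ := by
        apply (hB (F'.obj Y)).1
        show F'.map f ≫ (s ≫ F'.map f) = F'.map f ≫ 𝟙 _
        rw [← assoc, hs', comp_id, id_comp]
      exact ⟨s, hs', hss⟩
  have hcone_iff : ∀ {X Y : C} (f : X ⟶ Y), coneInKer F' f ↔ IsIso (F'.map f) := by
    intro X Y f
    constructor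
    · rintro ⟨Z, g, h, hT, hZ⟩
      rw [hbij_iff]
      intro A hA
      exact precomp_mor₁_bij_of_coloc G hT ((hker_iff Z).1 hZ) hA
    · intro hf
      obtain ⟨Z, g, h, hT⟩ := distinguished_cocone_triangle f
      refine ⟨Z, g, h, hT, (hker_iff Z).2 ?_⟩
      intro A hA v
      refine vanish_con₃ hT ?_ ?_ v
      · intro v' hv'
        exact ((hbij_iff f).1 hf hA).1 (show f ≫ v' = f ≫ 0 by
          rw [comp_zero]; exact hv')
      · exact shifted_precomp_surj f ((hbij_iff f).1 hf (ker_shift G hA (-1)))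
  have hWeq : coneInKer F' = (MorphismProperty.isomorphisms C').inverseImage F' := by
    funext X Y f
    exact propext (hcone_iff f)
  refine ⟨ffG'.full, ffG'.faithful, ?_, ?_⟩
  · intro M
    rw [hG'ess_iff M, hker_iff M]
  · rw [hWeq]
    exact adjF.isLocalization

end FG

end Tri

end VerdierAux

section Statement

universe v v' v'' u u' u''

variable {C : Type u} {C' : Type u'} {C'' : Type u''}
  [Category.{v} C] [Category.{v'} C'] [Category.{v''} C'']
  [HasShift C ℤ] [HasShift C' ℤ] [HasShift C'' ℤ]
  [Preadditive C] [Preadditive C'] [Preadditive C'']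
  [HasZeroObject C] [HasZeroObject C'] [HasZeroObject C'']
  [∀ n : ℤ, (shiftFunctor C n).Additive] [∀ n : ℤ, (shiftFunctor C' n).Additive]
  [∀ n : ℤ, (shiftFunctor C'' n).Additive]
  [Pretriangulated C] [Pretriangulated C'] [Pretriangulated C'']

/-- **Lemma A.2 ([AHKLY, Lemma 2.2]).** Let `𝒞' ⟶[F] 𝒞 ⟶[G] 𝒞''` be triangle functors with
`F` fully faithful, `Im F = Ker G`, and `G` inducing a triangle-equivalence
`𝒞 / Ker G ≌ 𝒞''` (formalized: `G` is a localization functor at the class of morphisms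
whose cone lies in `Ker G`). Then `F` has a right (resp. left) adjoint iff `G` does; and
in that case, for adjoints `F ⊣ F'` and `G ⊣ G'` (resp. `F' ⊣ F` and `G' ⊣ G`), `G'` is
fully faithful, `Im G' = Ker F'` and `F'` induces a triangle-equivalence
`𝒞 / Ker F' ≌ 𝒞'`. -/
theorem verdier_quotient_adjoint_transfer
    (F : C' ⥤ C) (G : C ⥤ C'')
    [F.CommShift ℤ] [F.IsTriangulated] [G.CommShift ℤ] [G.IsTriangulated]
    [F.Full] [F.Faithful]
    (him : F.essImage = kerSet G)
    (hloc : G.IsLocalization (coneInKer G)) :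
    (F.IsLeftAdjoint ↔ G.IsLeftAdjoint) ∧
    (F.IsRightAdjoint ↔ G.IsRightAdjoint) ∧
    (∀ (F' : C ⥤ C') (G' : C'' ⥤ C), (F ⊣ F') → (G ⊣ G') →
      (G'.Full ∧ G'.Faithful ∧ G'.essImage = kerSet F' ∧
        F'.IsLocalization (coneInKer F'))) ∧
    (∀ (F' : C ⥤ C') (G' : C'' ⥤ C), (F' ⊣ F) → (G' ⊣ G) →
      (G'.Full ∧ G'.Faithful ∧ G'.essImage = kerSet F' ∧
        F'.IsLocalization (coneInKer F'))) := by
  haveI := hloc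
  have him' : ∀ A : C, F.essImage A ↔ IsZero (G.obj A) := by
    intro A
    constructor
    · intro h
      exact (him ▸ h : A ∈ kerSet G)
    · intro h
      exact (him.symm ▸ (show A ∈ kerSet G from h))
  refine ⟨⟨?_, ?_⟩, ⟨?_, ?_⟩, ?_, ?_⟩
  · intro hF
    obtain ⟨F', ⟨adjF⟩⟩ := hF.exists_rightAdjoint
    exact VerdierAux.claimB him' adjF
  · intro hG
    obtain ⟨G', ⟨adjG⟩⟩ := hG.exists_rightAdjoint
    exact VerdierAux.claimC him' adjG
  · intro hF
    obtain ⟨F', ⟨adjF⟩⟩ := hF.exists_leftAdjoint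
    exact VerdierAux.claimB' him' adjF
  · intro hG
    obtain ⟨G', ⟨adjG⟩⟩ := hG.exists_leftAdjoint
    exact VerdierAux.claimC' him' adjG
  · intro F' G' adjF adjG
    obtain ⟨h1, h2, h3, h4⟩ := VerdierAux.part3 him' adjF adjG
    exact ⟨h1, h2, Set.ext (fun M => h3 M), h4⟩
  · intro F' G' adjF adjG
    obtain ⟨h1, h2, h3, h4⟩ := VerdierAux.part4 him' adjF adjG
    exact ⟨h1, h2, Set.ext (fun M => h3 M), h4⟩


end Statement
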